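/- Let Z be a positive integer, m a natural number, and A, q ≥ 0 real numbers with √q·m ≤ 1/2. Let R : ℤ → ℝ satisfy R(s) ≥ 0 for all s and R(s) = 0 for all s ≤ 0. If R(z) ≤ A + q·∑_{r=1}^{m} R(z−r) for all integers z with 1 ≤ z ≤ Z, then ∑_{z=1}^{Z} √(R(z)) ≤ 2·Z·√A. -/

import Mathlib

private lemma sqrt_add_le_aux (x y : ℝ) (hx : 0 ≤ x) (hy : 0 ≤ y) :
    Real.sqrt (x + y) ≤ Real.sqrt x + Real.sqrt y := by
  have h : Real.sqrt (x + y) ≤ Real.sqrt ((Real.sqrt x + Real.sqrt y) ^ 2) :=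
    Real.sqrt_le_sqrt (by nlinarith [Real.sq_sqrt hx, Real.sq_sqrt hy, Real.sqrt_nonneg x, Real.sqrt_nonneg y])
  rwa [Real.sqrt_sq (by positivity)] at h

private lemma sqrt_sum_le_aux {ι : Type*} (s : Finset ι) (f : ι → ℝ)
    (hf : ∀ i ∈ s, 0 ≤ f i) :
    Real.sqrt (∑ i ∈ s, f i) ≤ ∑ i ∈ s, Real.sqrt (f i) := by
  induction s using Finset.cons_induction with
  | empty => simp
  | cons a t ha ih =>
    rw [Finset.sum_cons, Finset.sum_cons]
    calc Real.sqrt (f a + ∑ i ∈ t, f i)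
        ≤ Real.sqrt (f a) + Real.sqrt (∑ i ∈ t, f i) :=
          sqrt_add_le_aux _ _ (hf a (Finset.mem_cons_self a t))
            (Finset.sum_nonneg fun i hi => hf i (Finset.mem_cons_of_mem hi))
      _ ≤ Real.sqrt (f a) + ∑ i ∈ t, Real.sqrt (f i) := by
          gcongr
          exact ih fun i hi => hf i (Finset.mem_cons_of_mem hi)

/-- Abstract square-root summation argument used in Lemmas 5 and 10 of the
Async-HFL convergence analysis: a nonnegative sequence vanishing on nonpositive
indices and satisfying `R(z) ≤ A + q·∑_{r=1}^{m} R(z−r)` for `1 ≤ z ≤ Z`, with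
`√q·m ≤ 1/2`, satisfies `∑_{z=1}^{Z} √(R(z)) ≤ 2·Z·√A`. -/
theorem asyncHFL_sum_of_sqrt_recursion
    (Z m : ℕ) (hZ : 1 ≤ Z) (A q : ℝ) (hA : 0 ≤ A) (hq : 0 ≤ q)
    (hqm : Real.sqrt q * (m : ℝ) ≤ 1 / 2) (R : ℤ → ℝ)
    (hRnn : ∀ s : ℤ, 0 ≤ R s) (hR0 : ∀ s : ℤ, s ≤ 0 → R s = 0)
    (hrec : ∀ z : ℤ, 1 ≤ z → z ≤ (Z : ℤ) →
      R z ≤ A + q * ∑ r ∈ Finset.Icc 1 m, R (z - (r : ℤ))) :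
    ∑ z ∈ Finset.Icc 1 Z, Real.sqrt (R (z : ℤ)) ≤ 2 * (Z : ℝ) * Real.sqrt A := by
  have sqA : (0:ℝ) ≤ Real.sqrt A := Real.sqrt_nonneg A
  -- key pointwise bound, by strong induction on an upper bound n for z
  have key : ∀ n : ℕ, ∀ z : ℤ, z ≤ (n : ℤ) → z ≤ (Z : ℤ) →
      Real.sqrt (R z) ≤ 2 * Real.sqrt A := by
    intro n
    induction n with
    | zero =>
      intro z hzn _
      rw [hR0 z (by exact_mod_cast hzn), Real.sqrt_zero]
      linarith
    | succ n ih =>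
      intro z hzn hzZ
      by_cases hz1 : z ≤ (n : ℤ)
      · exact ih z hz1 hzZ
      · push_neg at hz1
        have hz : 1 ≤ z := by omega
        have hrecz := hrec z hz hzZ
        have hsum_nn : 0 ≤ ∑ r ∈ Finset.Icc 1 m, R (z - (r : ℤ)) :=
          Finset.sum_nonneg fun r _ => hRnn _
        calc Real.sqrt (R z)
            ≤ Real.sqrt (A + q * ∑ r ∈ Finset.Icc 1 m, R (z - (r : ℤ))) :=
              Real.sqrt_le_sqrt hrecz
          _ ≤ Real.sqrt A + Real.sqrt (q * ∑ r ∈ Finset.Icc 1 m, R (z - (r : ℤ))) :=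
              sqrt_add_le_aux _ _ hA (by positivity)
          _ = Real.sqrt A + Real.sqrt q *
                Real.sqrt (∑ r ∈ Finset.Icc 1 m, R (z - (r : ℤ))) := by
              rw [Real.sqrt_mul hq]
          _ ≤ Real.sqrt A + Real.sqrt q *
                ∑ r ∈ Finset.Icc 1 m, Real.sqrt (R (z - (r : ℤ))) := by
              gcongr
              exact sqrt_sum_le_aux _ _ fun r _ => hRnn _
          _ ≤ Real.sqrt A + Real.sqrt q *
                ∑ r ∈ Finset.Icc 1 m, 2 * Real.sqrt A := by
              gcongr Real.sqrt A + Real.sqrt q * ?_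
              apply Finset.sum_le_sum
              intro r hr
              rcases le_or_gt (z - (r : ℤ)) 0 with h0 | h0
              · rw [hR0 _ h0, Real.sqrt_zero]; linarith
              · have hrm : 1 ≤ r := (Finset.mem_Icc.mp hr).1
                exact ih (z - r) (by omega) (by omega)
          _ = Real.sqrt A + (Real.sqrt q * (m : ℝ)) * (2 * Real.sqrt A) := by
              rw [Finset.sum_const, Nat.card_Icc]
              simp
              ring
          _ ≤ Real.sqrt A + (1 / 2) * (2 * Real.sqrt A) := by
              have : (0:ℝ) ≤ 2 * Real.sqrt A := by positivity
              nlinarith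
          _ = 2 * Real.sqrt A := by ring
  calc ∑ z ∈ Finset.Icc 1 Z, Real.sqrt (R (z : ℤ))
      ≤ ∑ z ∈ Finset.Icc 1 Z, 2 * Real.sqrt A := by
        apply Finset.sum_le_sum
        intro z hz
        exact key Z z (by exact_mod_cast (Finset.mem_Icc.mp hz).2) (by exact_mod_cast (Finset.mem_Icc.mp hz).2)
    _ = 2 * (Z : ℝ) * Real.sqrt A := by
        rw [Finset.sum_const, Nat.card_Icc]
        simp
        ring
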